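/- A sequence (a_i)_{i≥0} of nonnegative integers with finitely many nonzero entries is (k,2)-admissible iff a_i + a_{i+1} ≤ k for all i ≥ 0. The generating function Σ_{a ∈ C_{b_0}^{(k,2)}} q^{Σ j a_j} z^{Σ a_j}, summed over (k,2)-admissible sequences with a_0 ≤ b_0, equals Σ_{n≥0} z^n Σ_{m_1+2m_2+···+km_k = n, m_a ≥ 0} q^{(1/2)(mᵀAm − diag(A)·m) + c·m} / ((q)_{m_1}···(q)_{m_k}), where A_{ab}=2min(a,b), c=(0,...,0,1,2,...,k−b_0), and (q)_m = ∏_{j=1}^m (1−q^j). -/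

import Mathlib

open PowerSeries

/-- The exponent `½(mᵀ A m − diag(A)·m) + c·m` for `A_{ab} = 2 min(a,b)`,
`c_a = (a − b₀)₊`, written as a natural number:
`Σ_{a<b} 2 min(a,b) m_a m_b + Σ_a 2a · C(m_a, 2) + Σ_a (a − b₀)₊ m_a`. -/
def fermiExp2 (k b0 : ℕ) (m : Fin k → ℕ) : ℕ :=
  (∑ pq ∈ Finset.univ.filter (fun pq : Fin k × Fin k => pq.1 < pq.2),
      2 * (min (pq.1 : ℕ) (pq.2 : ℕ) + 1) * m pq.1 * m pq.2)
  + (∑ a : Fin k, 2 * ((a : ℕ) + 1) * Nat.choose (m a) 2)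
  + ∑ a : Fin k, (((a : ℕ) + 1) - b0) * m a

/-- The finite set of multiplicity vectors `m` with `Σ_a a·m_a = n`. -/
def restricted (k n : ℕ) : Finset (Fin k → ℕ) :=
  (Fintype.piFinset fun _ : Fin k => Finset.range (n + 1)).filter
    fun m => ∑ a : Fin k, ((a : ℕ) + 1) * m a = n

noncomputable section AuxFermi

namespace AuxFermi

abbrev PS := PowerSeries ℂ

/- ## Finsupp helpers -/

lemma le_sum_count (a : ℕ →₀ ℕ) (i : ℕ) : a i ≤ a.sum fun _ v => v := by
  by_cases h : i ∈ a.support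
  · exact Finset.single_le_sum (f := fun j => a j) (fun j _ => Nat.zero_le _) h
  · simp [Finsupp.notMem_support_iff.mp h]

lemma le_sum_wt (a : ℕ →₀ ℕ) (i : ℕ) : i * a i ≤ a.sum fun j v => j * v := by
  by_cases h : i ∈ a.support
  · exact Finset.single_le_sum (f := fun j => j * a j) (fun j _ => Nat.zero_le _) h
  · simp [Finsupp.notMem_support_iff.mp h]

lemma sum_le_wt (a : ℕ →₀ ℕ) : (a.sum fun _ v => v) ≤ a 0 + a.sum fun i v => i * v := by
  rw [Finsupp.sum, Finsupp.sum]
  calc ∑ i ∈ a.support, a i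
      ≤ ∑ i ∈ a.support, ((if i = 0 then a 0 else 0) + i * a i) := by
        apply Finset.sum_le_sum
        intro i _
        rcases Nat.eq_zero_or_pos i with rfl | hi
        · simp
        · rw [if_neg (by omega)]
          calc a i = 1 * a i := (one_mul _).symm
          _ ≤ i * a i := Nat.mul_le_mul_right _ hi
          _ ≤ 0 + i * a i := by omega
    _ = (∑ i ∈ a.support, if i = 0 then a 0 else 0) + ∑ i ∈ a.support, i * a i :=
        Finset.sum_add_distrib
    _ ≤ a 0 + ∑ i ∈ a.support, i * a i := by
        apply Nat.add_le_add_right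
        rw [Finset.sum_ite_eq' a.support 0 (fun _ => a 0)]
        split <;> omega

def consF (b : ℕ) (a : ℕ →₀ ℕ) : ℕ →₀ ℕ :=
  Finsupp.single 0 b + Finsupp.embDomain ⟨Nat.succ, Nat.succ_injective⟩ a

def tailF (a : ℕ →₀ ℕ) : ℕ →₀ ℕ :=
  Finsupp.comapDomain Nat.succ a Nat.succ_injective.injOn

@[simp] lemma tailF_apply (a : ℕ →₀ ℕ) (i : ℕ) : tailF a i = a (i + 1) :=
  Finsupp.comapDomain_apply _ _ _ _

@[simp] lemma consF_zero (b : ℕ) (a : ℕ →₀ ℕ) : consF b a 0 = b := by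
  have h0 : (0 : ℕ) ∉ Set.range (⟨Nat.succ, Nat.succ_injective⟩ : ℕ ↪ ℕ) := by
    rintro ⟨i, h⟩
    exact Nat.succ_ne_zero i h
  simp [consF, Finsupp.embDomain_notin_range _ _ _ h0]

@[simp] lemma consF_succ (b : ℕ) (a : ℕ →₀ ℕ) (i : ℕ) : consF b a (i + 1) = a i := by
  have := Finsupp.embDomain_apply_self (⟨Nat.succ, Nat.succ_injective⟩ : ℕ ↪ ℕ) a i
  simp only [consF, Finsupp.add_apply, Finsupp.single_apply]
  rw [if_neg (by omega)]
  simpa using this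

lemma consF_tailF (a : ℕ →₀ ℕ) : consF (a 0) (tailF a) = a := by
  ext i
  cases i with
  | zero => simp
  | succ i => simp

lemma tailF_consF (b : ℕ) (a : ℕ →₀ ℕ) : tailF (consF b a) = a := by
  ext i; simp

lemma consF_sum (b : ℕ) (a : ℕ →₀ ℕ) (g : ℕ → ℕ → ℕ) (h0 : ∀ i, g i 0 = 0)
    (hadd : ∀ i x y, g i (x + y) = g i x + g i y) :
    (consF b a).sum g = g 0 b + a.sum fun i v => g (i + 1) v := by
  rw [consF, Finsupp.sum_add_index' h0 hadd, Finsupp.sum_single_index (h0 0),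
    Finsupp.sum_embDomain]
  rfl

lemma consF_total (b : ℕ) (a : ℕ →₀ ℕ) :
    ((consF b a).sum fun _ v => v) = b + a.sum fun _ v => v := by
  rw [consF_sum b a (fun _ v => v) (fun _ => rfl) (fun _ _ _ => rfl)]

lemma consF_wt (b : ℕ) (a : ℕ →₀ ℕ) :
    ((consF b a).sum fun i v => i * v)
      = (a.sum fun i v => i * v) + a.sum fun _ v => v := by
  rw [consF_sum b a (fun i v => i * v) (fun i => by simp) (fun i x y => by ring)]
  rw [zero_mul, zero_add]
  rw [show (fun (i v : ℕ) => (i + 1) * v) = fun i v => i * v + v by funext i v; ring]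
  exact Finsupp.sum_add

/- ## Power series helpers -/

lemma constC_one_sub_X_pow (j : ℕ) (hj : 1 ≤ j) :
    constantCoeff (1 - X ^ j : PS) = 1 := by
  rw [map_sub, map_one, map_pow, constantCoeff_X, zero_pow (by omega), sub_zero]

def qprod (r : ℕ) : PS := ∏ j ∈ Finset.range r, (1 - X ^ (j + 1))

lemma constC_qprod (r : ℕ) : constantCoeff (qprod r) = 1 := by
  rw [qprod, map_prod]
  apply Finset.prod_eq_one
  intro j _
  exact constC_one_sub_X_pow (j + 1) (by omega)

def Pq (r : ℕ) : PS := (qprod r)⁻¹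

lemma qprod_mul_Pq (r : ℕ) : qprod r * Pq r = 1 :=
  PowerSeries.mul_inv_cancel _ (by rw [constC_qprod]; exact one_ne_zero)

lemma Pq_zero : Pq 0 = 1 := by
  have := qprod_mul_Pq 0
  rwa [qprod, Finset.prod_range_zero, one_mul] at this

lemma Pq_pred (r : ℕ) (hr : 1 ≤ r) : (1 - X ^ r) * Pq r = Pq (r - 1) := by
  obtain ⟨s, rfl⟩ : ∃ s, r = s + 1 := ⟨r - 1, by omega⟩
  rw [Pq, Pq, qprod, Finset.prod_range_succ, PowerSeries.mul_inv_rev, ← mul_assoc,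
    PowerSeries.mul_inv_cancel _ (by rw [constC_one_sub_X_pow (s+1) (by omega)]; exact one_ne_zero),
    one_mul]
  simp [qprod]

lemma one_sub_X_pow_ne_zero (n : ℕ) (hn : 1 ≤ n) : (1 - X ^ n : PS) ≠ 0 := by
  intro h
  have := constC_one_sub_X_pow n hn
  rw [h, map_zero] at this
  exact one_ne_zero this.symm

/- ## Fin card helpers -/

lemma card_filter_fin (K : ℕ) (p : ℕ → Prop) [DecidablePred p] :
    ((Finset.univ : Finset (Fin K)).filter fun j : Fin K => p (j : ℕ)).card
      = ((Finset.range K).filter p).card := by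
  rw [Finset.card_filter, Finset.card_filter]
  rw [Fin.sum_univ_eq_sum_range (fun i => if p i then 1 else 0)]

lemma card_filter_fin_le {K c : ℕ} (hc : c < K) :
    ((Finset.univ : Finset (Fin K)).filter fun j : Fin K => (j : ℕ) ≤ c).card = c + 1 := by
  rw [card_filter_fin K (fun j => j ≤ c)]
  have : (Finset.range K).filter (fun j => j ≤ c) = Finset.range (c + 1) := by
    ext x; simp only [Finset.mem_filter, Finset.mem_range]; omega
  rw [this, Finset.card_range]

lemma card_filter_fin_between {K b0 c : ℕ} (hc : c < K) :
    ((Finset.univ : Finset (Fin K)).filter fun j : Fin K => b0 ≤ (j : ℕ) ∧ (j : ℕ) ≤ c).card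
      = c + 1 - b0 := by
  rw [card_filter_fin K (fun j => b0 ≤ j ∧ j ≤ c)]
  have : (Finset.range K).filter (fun j => b0 ≤ j ∧ j ≤ c) = Finset.Ico b0 (c + 1) := by
    ext x; simp only [Finset.mem_filter, Finset.mem_range, Finset.mem_Ico]; omega
  rw [this, Nat.card_Ico]

lemma card_filter_fin_ge (K b0 : ℕ) :
    ((Finset.univ : Finset (Fin K)).filter fun j : Fin K => b0 ≤ (j : ℕ)).card = K - b0 := by
  rw [card_filter_fin K (fun j => b0 ≤ j)]
  have : (Finset.range K).filter (fun j => b0 ≤ j) = Finset.Ico b0 K := by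
    ext x; simp only [Finset.mem_filter, Finset.mem_range, Finset.mem_Ico]; omega
  rw [this, Nat.card_Ico]

end AuxFermi
namespace AuxFermi

/- ## The counting side -/

def admSet (k b n d : ℕ) : Set (ℕ →₀ ℕ) :=
  {a | (∀ i, a i + a (i + 1) ≤ k) ∧ a 0 ≤ b ∧
    (a.sum fun _ v => v) = n ∧ (a.sum fun i v => i * v) = d}

def Fq (k b n : ℕ) : PS := PowerSeries.mk fun d => ((admSet k b n d).ncard : ℂ)

lemma admSet_finite (k b n d : ℕ) : (admSet k b n d).Finite := by
  have key : ∀ a ∈ admSet k b n d, ∀ i, d < i → a i = 0 := by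
    intro a ha i hi
    by_contra h
    have h1 : i ≤ i * a i := Nat.le_mul_of_pos_right i (by omega)
    have h2 := le_sum_wt a i
    rw [ha.2.2.2] at h2
    omega
  have bnd : ∀ a ∈ admSet k b n d, ∀ i, a i ≤ n := by
    intro a ha i
    have := le_sum_count a i
    rw [ha.2.2.1] at this
    exact this
  apply Set.Finite.of_finite_image
    (f := fun a => (fun i : Fin (d + 1) => (⟨min (a (i : ℕ)) n, by omega⟩ : Fin (n + 1))))
  · exact Set.toFinite _
  · intro a ha a' ha' h
    ext i
    rcases Nat.lt_or_ge d i with hi | hi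
    · rw [key a ha i hi, key a' ha' i hi]
    · have := congrFun h ⟨i, by omega⟩
      simp only [Fin.mk.injEq] at this
      have b1 := bnd a ha i
      have b2 := bnd a' ha' i
      rw [min_eq_left b1, min_eq_left b2] at this
      exact this

lemma admSet_empty_of_lt (k b n d : ℕ) (h : n > b + d) : admSet k b n d = ∅ := by
  ext a
  simp only [admSet, Set.mem_setOf_eq, Set.mem_empty_iff_false, iff_false]
  rintro ⟨_, h2, h3, h4⟩
  have := sum_le_wt a
  rw [h3, h4] at this
  omega

lemma Fq_zero_n (k b d : ℕ) : admSet k b 0 d = if d = 0 then {(0 : ℕ →₀ ℕ)} else ∅ := by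
  ext a
  have hz : a ∈ admSet k b 0 d → a = 0 := by
    rintro ⟨_, _, h3, _⟩
    ext i
    have := le_sum_count a i
    rw [h3] at this
    simpa using this
  by_cases hd : d = 0
  · subst hd
    rw [if_pos rfl]
    simp only [Set.mem_singleton_iff]
    constructor
    · exact hz
    · rintro rfl
      exact ⟨fun i => by simp, by simp, by simp, by simp⟩
  · rw [if_neg hd]
    simp only [Set.mem_empty_iff_false, iff_false]
    intro h
    have h0 := hz h
    subst h0
    obtain ⟨_, _, _, h4⟩ := h
    simp at h4
    omega

lemma Fq_base (k b : ℕ) : Fq k b 0 = 1 := by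
  ext d
  rw [Fq, coeff_mk, Fq_zero_n]
  rcases Nat.eq_zero_or_pos d with rfl | hd
  · simp
  · rw [if_neg (by omega)]
    simp [PowerSeries.coeff_one, Nat.pos_iff_ne_zero.mp hd]

/-- the key shift bijection -/
lemma ncard_shift (k b n d : ℕ) (hbk : b ≤ k) (hbn : b ≤ n) (hd : n - b ≤ d) :
    ({a ∈ admSet k b n d | a 0 = b}).ncard
      = (admSet k (k - b) (n - b) (d - (n - b))).ncard := by
  have himg : tailF '' {a ∈ admSet k b n d | a 0 = b}
      = admSet k (k - b) (n - b) (d - (n - b)) := by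
    ext a'
    constructor
    · rintro ⟨a, ⟨⟨h1, h2, h3, h4⟩, h0⟩, rfl⟩
      have hc : a = consF b (tailF a) := by rw [← h0, consF_tailF]
      have ht := consF_total b (tailF a)
      have hw := consF_wt b (tailF a)
      rw [← hc, h3] at ht
      rw [← hc, h4] at hw
      refine ⟨fun i => by simpa using h1 (i + 1), ?_, by omega, by omega⟩
      have := h1 0
      rw [h0] at this
      simp only [tailF_apply]
      omega
    · rintro ⟨h1, h2, h3, h4⟩
      refine ⟨consF b a', ⟨⟨?_, ?_, ?_, ?_⟩, by simp⟩, tailF_consF b a'⟩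
      · intro i
        cases i with
        | zero =>
          simp only [consF_zero, consF_succ]
          omega
        | succ i => simpa using h1 i
      · simp
      · rw [consF_total, h3]; omega
      · rw [consF_wt, h3, h4]; omega
  rw [← himg]
  rw [Set.ncard_image_of_injOn]
  intro a ha a2 ha2 h
  rw [← consF_tailF a, ← consF_tailF a2, ha.2, ha2.2, h]

lemma coeff_ncard_shift (k b n : ℕ) (hbk : b ≤ k) (hbn : b ≤ n) (d : ℕ) :
    (({a ∈ admSet k b n d | a 0 = b}).ncard : ℂ)
      = (coeff d) (X ^ (n - b) * Fq k (k - b) (n - b)) := by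
  rw [PowerSeries.coeff_X_pow_mul']
  by_cases h : n - b ≤ d
  · rw [if_pos h, ncard_shift k b n d hbk hbn h, Fq, coeff_mk]
  · rw [if_neg h]
    have : {a ∈ admSet k b n d | a 0 = b} = ∅ := by
      ext a
      simp only [Set.mem_setOf_eq, Set.mem_empty_iff_false, iff_false, not_and]
      intro ha h0
      obtain ⟨_, _, h3, h4⟩ := ha
      have := sum_le_wt a
      rw [h3, h4, h0] at this
      omega
    rw [this]
    simp

lemma Fq_rec0 (k n : ℕ) : Fq k 0 n = X ^ n * Fq k k n := by
  ext d
  rw [Fq, coeff_mk]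
  have heq : admSet k 0 n d = {a ∈ admSet k 0 n d | a 0 = 0} := by
    ext a
    constructor
    · intro h
      exact ⟨h, by have := h.2.1; omega⟩
    · exact fun h => h.1
  rw [heq]
  have := coeff_ncard_shift k 0 n (by omega) (by omega) d
  simpa using this

lemma Fq_rec1 (k b n : ℕ) (hb : 1 ≤ b) (hbk : b ≤ k) (hbn : b ≤ n) :
    Fq k b n = Fq k (b - 1) n + X ^ (n - b) * Fq k (k - b) (n - b) := by
  ext d
  rw [map_add, Fq, Fq, coeff_mk, coeff_mk, ← coeff_ncard_shift k b n hbk hbn d]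
  have hsplit : admSet k b n d
      = admSet k (b - 1) n d ∪ {a ∈ admSet k b n d | a 0 = b} := by
    ext a
    simp only [admSet, Set.mem_setOf_eq, Set.mem_union]
    constructor
    · rintro ⟨h1, h2, h3, h4⟩
      rcases Nat.lt_or_ge (a 0) b with h | h
      · exact Or.inl ⟨h1, by omega, h3, h4⟩
      · exact Or.inr ⟨⟨h1, by omega, h3, h4⟩, by omega⟩
    · rintro (⟨h1, h2, h3, h4⟩ | ⟨⟨h1, h2, h3, h4⟩, h0⟩)
      · exact ⟨h1, by omega, h3, h4⟩
      · exact ⟨h1, h2, h3, h4⟩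
  have hdisj : Disjoint (admSet k (b - 1) n d) {a ∈ admSet k b n d | a 0 = b} := by
    rw [Set.disjoint_left]
    intro a ha hb2
    obtain ⟨_, h2, _, _⟩ := ha
    obtain ⟨_, h0⟩ := hb2
    omega
  have hcard : (admSet k b n d).ncard
      = (admSet k (b - 1) n d).ncard + ({a ∈ admSet k b n d | a 0 = b}).ncard := by
    conv_lhs => rw [hsplit]
    exact Set.ncard_union_eq hdisj (admSet_finite k (b-1) n d)
      ((admSet_finite k b n d).subset (fun a ha => ha.1))
  rw [hcard]
  push_cast
  ring

lemma Fq_rec2 (k b n : ℕ) (hb : 1 ≤ b) (hnb : n < b) :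
    Fq k b n = Fq k (b - 1) n := by
  have : ∀ d, admSet k b n d = admSet k (b - 1) n d := by
    intro d
    ext a
    simp only [admSet, Set.mem_setOf_eq]
    constructor
    · rintro ⟨h1, h2, h3, h4⟩
      have := le_sum_count a 0
      rw [h3] at this
      exact ⟨h1, by omega, h3, h4⟩
    · rintro ⟨h1, h2, h3, h4⟩
      exact ⟨h1, by omega, h3, h4⟩
  ext d
  rw [Fq, Fq, coeff_mk, coeff_mk, this d]

end AuxFermi
namespace AuxFermi

/- ## The fermionic side -/

def Sv {K : ℕ} (m : Fin K → ℕ) (j : Fin K) : ℕ :=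
  ∑ a : Fin K, if (j : ℕ) ≤ (a : ℕ) then m a else 0

def expo (K b : ℕ) (m : Fin K → ℕ) : ℕ :=
  (∑ j : Fin K, (Sv m j) ^ 2) + ∑ j : Fin K, if b ≤ (j : ℕ) then Sv m j else 0

def invP {K : ℕ} (m : Fin K → ℕ) : PS :=
  (∏ a, ∏ j ∈ Finset.range (m a), (1 - X ^ (j + 1)))⁻¹

def gq (K b n : ℕ) : PS := ∑ m ∈ restricted K n, X ^ (expo K b m) * invP m

lemma mem_restricted {K n : ℕ} (m : Fin K → ℕ) :
    m ∈ restricted K n ↔ ∑ a : Fin K, ((a : ℕ) + 1) * m a = n := by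
  simp only [restricted, Finset.mem_filter, Fintype.mem_piFinset, Finset.mem_range]
  constructor
  · exact And.right
  · intro h
    refine ⟨fun a => ?_, h⟩
    have h1 : ((a : ℕ) + 1) * m a ≤ n :=
      h ▸ Finset.single_le_sum (f := fun a : Fin K => ((a : ℕ) + 1) * m a)
        (fun _ _ => Nat.zero_le _) (Finset.mem_univ a)
    have h2 : m a ≤ ((a : ℕ) + 1) * m a := Nat.le_mul_of_pos_left _ (by omega)
    omega

lemma Sv_snoc_castSucc {K : ℕ} (m' : Fin K → ℕ) (r : ℕ) (j : Fin K) :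
    Sv (Fin.snoc m' r) j.castSucc = Sv m' j + r := by
  rw [Sv, Sv, Fin.sum_univ_castSucc]
  simp only [Fin.snoc_castSucc, Fin.snoc_last, Fin.coe_castSucc, Fin.val_last]
  rw [if_pos (by omega : (j : ℕ) ≤ K)]

lemma Sv_snoc_last {K : ℕ} (m' : Fin K → ℕ) (r : ℕ) :
    Sv (Fin.snoc m' r) (Fin.last K) = r := by
  rw [Sv, Fin.sum_univ_castSucc]
  simp only [Fin.snoc_castSucc, Fin.snoc_last, Fin.coe_castSucc, Fin.val_last]
  rw [if_pos le_rfl]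
  rw [Finset.sum_eq_zero fun a _ => by rw [if_neg (by have := a.isLt; omega)], zero_add]

lemma sum_Sv {K : ℕ} (m : Fin K → ℕ) :
    ∑ j, Sv m j = ∑ a : Fin K, ((a : ℕ) + 1) * m a := by
  rw [show (∑ j, Sv m j) = ∑ j : Fin K, ∑ a : Fin K, if (j : ℕ) ≤ (a : ℕ) then m a else 0
    from rfl]
  rw [Finset.sum_comm]
  apply Finset.sum_congr rfl
  intro a _
  rw [← Finset.sum_filter, Finset.sum_const, card_filter_fin_le a.isLt, smul_eq_mul]

lemma expo_snoc (k b n r : ℕ) (hb : b ≤ k + 1) (m' : Fin k → ℕ)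
    (hm' : ∑ a : Fin k, ((a : ℕ) + 1) * m' a = n - (k + 1) * r) (hr : (k + 1) * r ≤ n) :
    expo (k + 1) b (Fin.snoc m' r)
      = (k+1)*r^2 + ((k+1)-b)*r + 2*(r*(n-(k+1)*r)) + expo k (min b k) m' := by
  have hquad : ∑ j : Fin (k+1), (Sv (Fin.snoc m' r) j) ^ 2
      = ((∑ j : Fin k, (Sv m' j) ^ 2) + (2*r*(n-(k+1)*r) + k*r^2)) + r^2 := by
    rw [Fin.sum_univ_castSucc]
    simp only [Sv_snoc_castSucc, Sv_snoc_last]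
    congr 1
    calc ∑ j : Fin k, (Sv m' j + r)^2
        = ∑ j : Fin k, ((Sv m' j)^2 + (2*r*(Sv m' j) + r^2)) :=
          Finset.sum_congr rfl (fun j _ => by ring)
      _ = (∑ j : Fin k, (Sv m' j)^2) + ((∑ j : Fin k, 2*r*(Sv m' j)) + ∑ _j : Fin k, r^2) := by
          rw [Finset.sum_add_distrib, Finset.sum_add_distrib]
      _ = (∑ j : Fin k, (Sv m' j)^2) + (2*r*(n-(k+1)*r) + k*r^2) := by
          rw [← Finset.mul_sum, sum_Sv, hm', Finset.sum_const, Finset.card_univ,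
            Fintype.card_fin, smul_eq_mul]
  have hlin : ∑ j : Fin (k+1), (if b ≤ (j : ℕ) then Sv (Fin.snoc m' r) j else 0)
      = (∑ j : Fin k, if min b k ≤ (j : ℕ) then Sv m' j else 0) + ((k+1)-b)*r := by
    rw [Fin.sum_univ_castSucc]
    simp only [Sv_snoc_castSucc, Sv_snoc_last, Fin.coe_castSucc, Fin.val_last]
    have step1 : ∑ j : Fin k, (if b ≤ (j : ℕ) then Sv m' j + r else 0)
        = (∑ j : Fin k, if b ≤ (j : ℕ) then Sv m' j else 0)
          + (∑ j : Fin k, if b ≤ (j : ℕ) then r else 0) := by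
      rw [← Finset.sum_add_distrib]
      apply Finset.sum_congr rfl
      intro j _
      split <;> simp
    have step2 : (∑ j : Fin k, if b ≤ (j : ℕ) then r else 0) = (k - b) * r := by
      rw [← Finset.sum_filter, Finset.sum_const, card_filter_fin_ge k b, smul_eq_mul]
    have step3 : (∑ j : Fin k, if b ≤ (j : ℕ) then Sv m' j else 0)
        = ∑ j : Fin k, if min b k ≤ (j : ℕ) then Sv m' j else 0 := by
      apply Finset.sum_congr rfl
      intro j _
      have := j.isLt
      congr 1
      simp only [eq_iff_iff]
      omega
    rw [step1, step2, step3]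
    rcases Nat.lt_or_ge b (k+1) with h | h
    · rw [if_pos (by omega : b ≤ k)]
      have : (k+1) - b = (k - b) + 1 := by omega
      rw [this, Nat.succ_mul]
      omega
    · rw [if_neg (by omega)]
      have h1 : (k+1) - b = 0 := by omega
      have h2 : k - b = 0 := by omega
      rw [h1, h2]
      omega
  rw [expo, expo, hquad, hlin]
  ring

lemma invP_snoc {k : ℕ} (m' : Fin k → ℕ) (r : ℕ) :
    invP (Fin.snoc m' r) = invP m' * Pq r := by
  rw [invP, invP, Pq, qprod, Fin.prod_univ_castSucc]
  simp only [Fin.snoc_castSucc, Fin.snoc_last]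
  rw [PowerSeries.mul_inv_rev, mul_comm]

lemma gq_rec (k b n : ℕ) (hb : b ≤ k + 1) :
    gq (k+1) b n = ∑ r ∈ (Finset.range (n+1)).filter (fun r => (k+1)*r ≤ n),
      X ^ ((k+1)*r^2 + ((k+1)-b)*r + 2*(r*(n-(k+1)*r))) * Pq r
        * gq k (min b k) (n - (k+1)*r) := by
  rw [gq]
  have hexp : ∀ r, X ^ ((k+1)*r^2 + ((k+1)-b)*r + 2*(r*(n-(k+1)*r))) * Pq r
      * gq k (min b k) (n - (k+1)*r)
      = ∑ m' ∈ restricted k (n - (k+1)*r),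
          X ^ ((k+1)*r^2 + ((k+1)-b)*r + 2*(r*(n-(k+1)*r))) * Pq r
            * (X ^ (expo k (min b k) m') * invP m') := by
    intro r
    rw [gq, Finset.mul_sum]
  rw [Finset.sum_congr rfl (fun r _ => hexp r)]
  rw [Finset.sum_sigma' ((Finset.range (n+1)).filter (fun r => (k+1)*r ≤ n))
    (fun r => restricted k (n - (k+1)*r))]
  apply Finset.sum_nbij' (i := fun m => (⟨m (Fin.last k), Fin.init m⟩ : Σ _r : ℕ, Fin k → ℕ))
    (j := fun p => Fin.snoc p.2 p.1)
  · -- hi : membership forward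
    intro m hm
    rw [mem_restricted] at hm
    have hsplit : (∑ a : Fin k, ((a : ℕ) + 1) * (Fin.init m) a) + (k+1) * m (Fin.last k) = n := by
      rw [← hm, Fin.sum_univ_castSucc]
      simp [Fin.init]
    have hle : (k+1) * m (Fin.last k) ≤ n := by omega
    simp only [Finset.mem_sigma, Finset.mem_filter, Finset.mem_range]
    refine ⟨⟨?_, hle⟩, ?_⟩
    · have : m (Fin.last k) ≤ (k+1) * m (Fin.last k) := Nat.le_mul_of_pos_left _ (by omega)
      omega
    · rw [mem_restricted]
      omega
  · -- hj : membership backward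
    rintro ⟨r, m'⟩ hp
    simp only [Finset.mem_sigma, Finset.mem_filter, Finset.mem_range] at hp
    obtain ⟨⟨hr1, hr2⟩, hm'⟩ := hp
    rw [mem_restricted] at hm' ⊢
    rw [Fin.sum_univ_castSucc]
    simp only [Fin.snoc_castSucc, Fin.snoc_last, Fin.coe_castSucc, Fin.val_last]
    omega
  · -- left_inv
    intro m hm
    exact Fin.snoc_init_self m
  · -- right_inv
    rintro ⟨r, m'⟩ hp
    simp only [Fin.snoc_last, Fin.init_snoc]
  · -- term equality
    intro m hm
    rw [mem_restricted] at hm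
    have hsplit : (∑ a : Fin k, ((a : ℕ) + 1) * (Fin.init m) a) + (k+1) * m (Fin.last k) = n := by
      rw [← hm, Fin.sum_univ_castSucc]
      simp [Fin.init]
    set r := m (Fin.last k) with hrdef
    have hle : (k+1) * r ≤ n := by omega
    have hm' : ∑ a : Fin k, ((a : ℕ) + 1) * (Fin.init m) a = n - (k+1)*r := by omega
    have hsnoc : Fin.snoc (Fin.init m) r = m := Fin.snoc_init_self m
    calc X ^ expo (k+1) b m * invP m
        = X ^ expo (k+1) b (Fin.snoc (Fin.init m) r) * invP (Fin.snoc (Fin.init m) r) := by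
          rw [hsnoc]
      _ = X ^ ((k+1)*r^2 + ((k+1)-b)*r + 2*(r*(n-(k+1)*r)) + expo k (min b k) (Fin.init m))
            * (invP (Fin.init m) * Pq r) := by
          rw [expo_snoc k b n r hb _ hm' hle, invP_snoc]
      _ = X ^ ((k+1)*r^2 + ((k+1)-b)*r + 2*(r*(n-(k+1)*r))) * Pq r
            * (X ^ (expo k (min b k) (Fin.init m)) * invP (Fin.init m)) := by
          rw [pow_add]
          ring

lemma gq_k0 (b n : ℕ) : gq 0 b n = if n = 0 then 1 else 0 := by
  have hsum : ∀ m : Fin 0 → ℕ, ∑ a : Fin 0, ((a : ℕ) + 1) * m a = 0 :=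
    fun m => Finset.sum_eq_zero fun a _ => Fin.elim0 a
  have hres : restricted 0 n = if n = 0 then {(fun _ => 0 : Fin 0 → ℕ)} else ∅ := by
    ext m
    rw [mem_restricted, hsum m]
    by_cases hn : n = 0
    · subst hn
      rw [if_pos rfl]
      simp only [Finset.mem_singleton]
      constructor
      · intro _
        exact funext fun a => Fin.elim0 a
      · intro _
        trivial
    · rw [if_neg hn]
      simp only [Finset.notMem_empty, iff_false]
      omega
  rw [gq, hres]
  by_cases hn : n = 0
  · subst hn
    rw [if_pos rfl, if_pos rfl, Finset.sum_singleton]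
    have he : expo 0 b (fun _ => 0) = 0 := by
      rw [expo]
      rw [Finset.univ_eq_empty, Finset.sum_empty, Finset.sum_empty]
      omega
    have hi : invP (fun _ => 0 : Fin 0 → ℕ) = 1 := by
      rw [invP, Finset.univ_eq_empty, Finset.prod_empty, inv_one]
    rw [he, hi, pow_zero, one_mul]
  · rw [if_neg hn, if_neg hn, Finset.sum_empty]

end AuxFermi
namespace AuxFermi

/- ## fq = X^n * Fq and its recursions -/

def fq (k b n : ℕ) : PS := X ^ n * Fq k b n

lemma fq_base (k b : ℕ) : fq k b 0 = 1 := by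
  rw [fq, Fq_base, pow_zero, one_mul]

lemma fq_rec0 (k n : ℕ) : fq k 0 n = X ^ n * fq k k n := by
  rw [fq, fq, Fq_rec0]

lemma fq_rec1 (k b n : ℕ) (hb : 1 ≤ b) (hbk : b ≤ k) (hbn : b ≤ n) :
    fq k b n = fq k (b-1) n + X ^ n * fq k (k-b) (n-b) := by
  rw [fq, fq, fq, Fq_rec1 k b n hb hbk hbn, mul_add]

lemma fq_rec2 (k b n : ℕ) (hb : 1 ≤ b) (hnb : n < b) : fq k b n = fq k (b-1) n := by
  rw [fq, fq, Fq_rec2 k b n hb hnb]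

lemma fq_k0 (b n : ℕ) : fq 0 b n = if n = 0 then 1 else 0 := by
  by_cases hn : n = 0
  · subst hn
    rw [if_pos rfl]
    exact fq_base 0 b
  · rw [if_neg hn, fq]
    have hF : Fq 0 b n = 0 := by
      ext d
      rw [Fq, coeff_mk, map_zero]
      have hempty : admSet 0 b n d = ∅ := by
        ext a
        simp only [admSet, Set.mem_setOf_eq, Set.mem_empty_iff_false, iff_false]
        rintro ⟨h1, _, h3, _⟩
        apply hn
        rw [← h3]
        have ha : a = 0 := Finsupp.ext fun i => by
          have := h1 i
          have h0 : a i = 0 := by omega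
          simp [h0]
        rw [ha]
        simp
      rw [hempty]
      simp
    rw [hF, mul_zero]

/- ## the sum hq and exponent identities -/

def Rset (k n : ℕ) : Finset ℕ := (Finset.range (n+1)).filter (fun r => (k+1)*r ≤ n)

def eps (k b n r : ℕ) : ℕ := (k+1)*r^2 + ((k+1)-b)*r + 2*(r*(n-(k+1)*r))

def hq (k b n : ℕ) : PS :=
  ∑ r ∈ Rset k n, X ^ (eps k b n r) * Pq r * fq k (min b k) (n - (k+1)*r)

lemma mem_Rset {k n r : ℕ} : r ∈ Rset k n ↔ (k+1)*r ≤ n := by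
  simp only [Rset, Finset.mem_filter, Finset.mem_range]
  constructor
  · exact And.right
  · intro h
    have : r ≤ (k+1)*r := Nat.le_mul_of_pos_left _ (by omega)
    exact ⟨by omega, h⟩

lemma xshuffle (A B C D : ℕ) (u v : PS) (h : A + B = C + D) :
    X ^ A * u * (X ^ B * v) = X ^ C * (X ^ D * u * v) := by
  calc X ^ A * u * (X ^ B * v) = X ^ (A+B) * (u * v) := by rw [pow_add]; ring
    _ = X ^ (C+D) * (u * v) := by rw [h]
    _ = X ^ C * (X ^ D * u * v) := by rw [pow_add]; ring

lemma eps_pred (k b n r : ℕ) (hb : 1 ≤ b) (hbk : b ≤ k+1) :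
    eps k (b-1) n r = eps k b n r + r := by
  simp only [eps]
  rw [show (k+1)-(b-1) = ((k+1)-b)+1 from by omega, Nat.succ_mul]
  ring

lemma eps_rec0 (k n r : ℕ) (h : (k+1)*r ≤ n) :
    eps k 0 n r + (n - (k+1)*r) = n + eps k (k+1) n r := by
  obtain ⟨u, hu⟩ : ∃ u, n = (k+1)*r + u := ⟨n - (k+1)*r, by generalize (k+1)*r = Q at h ⊢; omega⟩
  simp only [eps]
  have e1 : n - (k+1)*r = u := by rw [hu]; generalize (k+1)*r = Q; omega
  have e2 : (k+1) - 0 = k+1 := by omega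
  have e3 : (k+1) - (k+1) = 0 := by omega
  rw [e1, e2, e3, hu]
  ring

lemma eps_X1 (k b n r : ℕ) (hb : 1 ≤ b) (hbk : b ≤ k+1) (h : (k+1)*r + b ≤ n) :
    eps k b n r + (n - (k+1)*r) = n + eps k ((k+1)-b) (n-b) r := by
  obtain ⟨w, hw⟩ : ∃ w, (k+1) = b + w := ⟨(k+1)-b, by omega⟩
  obtain ⟨u, hu⟩ : ∃ u, n = b + (k+1)*r + u :=
    ⟨n - b - (k+1)*r, by generalize (k+1)*r = Q at h ⊢; omega⟩
  simp only [eps]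
  have e5 : (k+1) - ((k+1)-b) = b := by omega
  have e2 : (k+1) - b = w := by omega
  have e1 : n - (k+1)*r = b + u := by rw [hu]; generalize (k+1)*r = Q; omega
  have e3 : (n-b) - (k+1)*r = u := by rw [hu]; generalize (k+1)*r = Q; omega
  rw [e5, e2, e1, e3, hu, hw]
  ring

lemma eps_X2 (k b n s : ℕ) (hb : 1 ≤ b) (hbk : b ≤ k+1) (hbn : b ≤ n)
    (h : (k+1)*(s+1) ≤ n) :
    eps k b n (s+1) = n + eps k ((k+1)-b) (n-b) s + ((n-b) - (k+1)*s) := by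
  obtain ⟨w, hw⟩ : ∃ w, (k+1) = b + w := ⟨(k+1)-b, by omega⟩
  obtain ⟨v, hv⟩ : ∃ v, n = b + (k+1)*s + w + v := by
    refine ⟨n - b - (k+1)*s - w, ?_⟩
    rw [Nat.mul_succ] at h
    generalize (k+1)*s = Q at h ⊢
    omega
  simp only [eps]
  have e4 : (k+1) - ((k+1)-b) = b := by omega
  have e2 : (k+1) - b = w := by omega
  have e1 : n - (k+1)*(s+1) = v := by
    rw [hv, Nat.mul_succ]
    generalize (k+1)*s = Q
    omega
  have e3 : (n-b) - (k+1)*s = w + v := by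
    rw [hv]
    generalize (k+1)*s = Q
    omega
  rw [e4, e2, e1, e3, hv, hw]
  ring

/- ## recursions for hq -/

lemma hq_base (k b : ℕ) : hq k b 0 = 1 := by
  have hR : Rset k 0 = {0} := by
    ext r
    rw [Finset.mem_singleton, mem_Rset]
    constructor
    · intro h
      have : r ≤ (k+1)*r := Nat.le_mul_of_pos_left _ (by omega)
      omega
    · rintro rfl
      simp
  rw [hq, hR, Finset.sum_singleton]
  have he : eps k b 0 0 = 0 := by simp [eps]
  have ha : 0 - (k+1)*0 = 0 := by simp
  rw [he, ha, pow_zero, Pq_zero, one_mul, one_mul, fq_base]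

lemma hq_rec0 (k n : ℕ) : hq k 0 n = X ^ n * hq k (k+1) n := by
  rw [hq, hq, Finset.mul_sum]
  apply Finset.sum_congr rfl
  intro r hr
  rw [mem_Rset] at hr
  rw [min_eq_left (Nat.zero_le k), min_eq_right (by omega : k ≤ k+1)]
  rw [fq_rec0 k (n - (k+1)*r)]
  exact xshuffle _ _ _ _ _ _ (eps_rec0 k n r hr)

lemma hq_rec2 (k b n : ℕ) (hb : 1 ≤ b) (hbk : b ≤ k+1) (hnb : n < b) :
    hq k b n = hq k (b-1) n := by
  rw [hq, hq]
  apply Finset.sum_congr rfl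
  intro r hr
  rw [mem_Rset] at hr
  have hr0 : r = 0 := by
    rcases Nat.eq_zero_or_pos r with h | h
    · exact h
    · exfalso
      have := Nat.le_mul_of_pos_right (k+1) h
      omega
  subst hr0
  have he : ∀ b', eps k b' n 0 = 0 := fun b' => by simp [eps]
  rw [he b, he (b-1)]
  congr 1
  rcases Nat.lt_or_ge (k:ℕ) b with h | h
  · -- b = k+1
    rw [min_eq_right (by omega), min_eq_right (by omega)]
  · rw [min_eq_left (by omega), min_eq_left (by omega)]
    rw [Nat.mul_zero, Nat.sub_zero]
    exact fq_rec2 k b n hb hnb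

end AuxFermi
namespace AuxFermi

lemma hq_rec1_low (k b n : ℕ) (hb : 1 ≤ b) (hbk : b ≤ k) (hbn : b ≤ n) :
    hq k b n = hq k (b-1) n + X ^ n * hq k ((k+1)-b) (n-b) := by
  have hAsub : Rset k (n-b) ⊆ Rset k n := by
    intro r hr
    rw [mem_Rset] at hr ⊢
    generalize (k+1)*r = Q at hr ⊢
    omega
  -- Step A : split the LHS termwise
  have stepA : hq k b n
      = (∑ r ∈ Rset k n, X ^ (eps k (b-1) n r) * Pq r * fq k (b-1) (n - (k+1)*r))
        + ((∑ r ∈ Rset k n, if b ≤ n - (k+1)*r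
            then X ^ (eps k b n r + (n - (k+1)*r)) * Pq r * fq k (k-b) ((n - (k+1)*r) - b)
            else 0)
          + ∑ r ∈ Rset k n,
              X ^ (eps k b n r) * ((1 - X ^ r) * Pq r) * fq k (b-1) (n - (k+1)*r)) := by
    rw [hq, ← Finset.sum_add_distrib, ← Finset.sum_add_distrib]
    apply Finset.sum_congr rfl
    intro r hr
    rw [mem_Rset] at hr
    rw [min_eq_left hbk]
    have hsplit : X ^ (eps k b n r) * Pq r * fq k b (n - (k+1)*r)
        = X ^ (eps k b n r) * Pq r * fq k (b-1) (n - (k+1)*r)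
          + (if b ≤ n - (k+1)*r
              then X ^ (eps k b n r + (n - (k+1)*r)) * Pq r * fq k (k-b) ((n - (k+1)*r) - b)
              else 0) := by
      by_cases hbM : b ≤ n - (k+1)*r
      · rw [if_pos hbM, fq_rec1 k b (n - (k+1)*r) hb hbk hbM, mul_add, pow_add]
        ring
      · rw [if_neg hbM, fq_rec2 k b (n - (k+1)*r) hb (not_le.mp hbM), add_zero]
    rw [hsplit, eps_pred k b n r hb (by omega), pow_add]
    ring
  -- Step D : split the target termwise
  have stepD : X ^ n * hq k ((k+1)-b) (n-b)
      = (∑ r ∈ Rset k (n-b),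
          X ^ (n + eps k ((k+1)-b) (n-b) r) * Pq r * fq k (k-b) ((n-b) - (k+1)*r))
        + ∑ r ∈ Rset k (n-b), (if (k+1)-b ≤ (n-b) - (k+1)*r
            then X ^ (n + eps k ((k+1)-b) (n-b) r + ((n-b) - (k+1)*r)) * Pq r
              * fq k (b-1) (((n-b) - (k+1)*r) - ((k+1)-b))
            else 0) := by
    rw [hq, Finset.mul_sum, ← Finset.sum_add_distrib]
    apply Finset.sum_congr rfl
    intro r hr
    rw [mem_Rset] at hr
    rw [min_eq_left (by omega : (k+1)-b ≤ k)]
    by_cases hcM : (k+1)-b ≤ (n-b) - (k+1)*r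
    · rw [if_pos hcM, fq_rec1 k ((k+1)-b) ((n-b) - (k+1)*r) (by omega) (by omega) hcM]
      have h1 : (k+1)-b-1 = k-b := by omega
      have h2 : k - ((k+1)-b) = b-1 := by omega
      rw [h1, h2, mul_add, pow_add, pow_add]
      ring
    · rw [if_neg hcM, fq_rec2 k ((k+1)-b) ((n-b) - (k+1)*r) (by omega) (not_le.mp hcM),
        add_zero]
      have h1 : (k+1)-b-1 = k-b := by omega
      rw [h1, pow_add]
      ring
  -- Step B : the T2 sum equals the U1 sum
  have hvan : ∀ r ∈ Rset k n, r ∉ Rset k (n-b) →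
      (if b ≤ n - (k+1)*r
        then X ^ (eps k b n r + (n - (k+1)*r)) * Pq r * fq k (k-b) ((n - (k+1)*r) - b)
        else 0) = 0 := by
    intro r hrA hrA'
    rw [mem_Rset] at hrA
    rw [if_neg]
    intro hguard
    apply hrA'
    rw [mem_Rset]
    generalize (k+1)*r = Q at hguard hrA ⊢
    omega
  have stepB : (∑ r ∈ Rset k n, if b ≤ n - (k+1)*r
        then X ^ (eps k b n r + (n - (k+1)*r)) * Pq r * fq k (k-b) ((n - (k+1)*r) - b)
        else 0)
      = ∑ r ∈ Rset k (n-b),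
          X ^ (n + eps k ((k+1)-b) (n-b) r) * Pq r * fq k (k-b) ((n-b) - (k+1)*r) := by
    rw [← Finset.sum_subset hAsub hvan]
    apply Finset.sum_congr rfl
    intro r hr
    rw [mem_Rset] at hr
    have hguard : b ≤ n - (k+1)*r := by
      generalize (k+1)*r = Q at hr ⊢
      omega
    rw [if_pos hguard]
    have harg : (n - (k+1)*r) - b = (n-b) - (k+1)*r := by
      generalize (k+1)*r = Q
      omega
    rw [harg, eps_X1 k b n r hb (by omega)
      (by generalize (k+1)*r = Q at hr ⊢; omega)]
  -- Step C : the T3 sum equals the U2 sum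
  have stepC : (∑ r ∈ Rset k n,
        X ^ (eps k b n r) * ((1 - X ^ r) * Pq r) * fq k (b-1) (n - (k+1)*r))
      = ∑ r ∈ Rset k (n-b), (if (k+1)-b ≤ (n-b) - (k+1)*r
          then X ^ (n + eps k ((k+1)-b) (n-b) r + ((n-b) - (k+1)*r)) * Pq r
            * fq k (b-1) (((n-b) - (k+1)*r) - ((k+1)-b))
          else 0) := by
    rw [← Finset.sum_filter]
    have hvan3 : ∀ r ∈ Rset k n, r ∉ (Rset k n).filter (fun r => 1 ≤ r) →
        X ^ (eps k b n r) * ((1 - X ^ r) * Pq r) * fq k (b-1) (n - (k+1)*r) = 0 := by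
      intro r hr hr'
      have hr0 : r = 0 := by
        by_contra h
        exact hr' (Finset.mem_filter.mpr ⟨hr, by omega⟩)
      subst hr0
      simp
    rw [← Finset.sum_subset (Finset.filter_subset _ _) hvan3]
    apply Finset.sum_nbij' (i := fun r => r - 1) (j := fun r => r + 1)
    · -- forward membership
      intro r hr
      simp only [Finset.mem_filter, mem_Rset] at hr ⊢
      obtain ⟨hr1, hr2⟩ := hr
      obtain ⟨s, rfl⟩ : ∃ s, r = s + 1 := ⟨r - 1, by omega⟩
      simp only [Nat.add_sub_cancel]
      rw [Nat.mul_succ] at hr1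
      constructor
      · generalize (k+1)*s = Q at hr1 ⊢
        omega
      · generalize (k+1)*s = Q at hr1 ⊢
        omega
    · -- backward membership
      intro s hs
      simp only [Finset.mem_filter, mem_Rset] at hs ⊢
      obtain ⟨hs1, hs2⟩ := hs
      rw [Nat.mul_succ]
      constructor
      · generalize (k+1)*s = Q at hs1 hs2 ⊢
        omega
      · omega
    · intro r hr
      simp only [Finset.mem_filter] at hr
      omega
    · intro s _
      simp
    · -- term equality
      intro r hr
      simp only [Finset.mem_filter, mem_Rset] at hr
      obtain ⟨hr1, hr2⟩ := hr
      obtain ⟨s, rfl⟩ : ∃ s, r = s + 1 := ⟨r - 1, by omega⟩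
      simp only [Nat.add_sub_cancel]
      have hP : (1 - X ^ (s+1)) * Pq (s+1) = Pq s := by
        have := Pq_pred (s+1) (by omega)
        rwa [Nat.add_sub_cancel] at this
      rw [hP]
      have harg : n - (k+1)*(s+1) = ((n-b) - (k+1)*s) - ((k+1)-b) := by
        rw [Nat.mul_succ]
        generalize (k+1)*s = Q
        omega
      rw [harg, eps_X2 k b n s hb (by omega) hbn hr1]
  -- assemble
  have hb1 : hq k (b-1) n
      = ∑ r ∈ Rset k n, X ^ (eps k (b-1) n r) * Pq r * fq k (b-1) (n - (k+1)*r) := by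
    rw [hq]
    apply Finset.sum_congr rfl
    intro r _
    rw [min_eq_left (by omega : b-1 ≤ k)]
  rw [stepA, stepB, stepC, stepD, hb1]

lemma hq_rec1_top (k n : ℕ) (hbn : k+1 ≤ n) :
    hq k (k+1) n = hq k k n + X ^ n * hq k 0 (n-(k+1)) := by
  -- Step A : split LHS into the (b-1)-sum plus the boundary sum
  have stepA : hq k (k+1) n
      = (∑ r ∈ Rset k n, X ^ (eps k k n r) * Pq r * fq k k (n - (k+1)*r))
        + ∑ r ∈ Rset k n,
            X ^ (eps k (k+1) n r) * ((1 - X ^ r) * Pq r) * fq k k (n - (k+1)*r) := by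
    rw [hq, ← Finset.sum_add_distrib]
    apply Finset.sum_congr rfl
    intro r hr
    rw [min_eq_right (by omega : k ≤ k+1)]
    have he : eps k k n r = eps k (k+1) n r + r := by
      have := eps_pred k (k+1) n r (by omega) (by omega)
      rwa [Nat.add_sub_cancel] at this
    rw [he, pow_add]
    ring
  have stepC : (∑ r ∈ Rset k n,
        X ^ (eps k (k+1) n r) * ((1 - X ^ r) * Pq r) * fq k k (n - (k+1)*r))
      = X ^ n * hq k 0 (n-(k+1)) := by
    rw [hq, Finset.mul_sum]
    have hvan3 : ∀ r ∈ Rset k n, r ∉ (Rset k n).filter (fun r => 1 ≤ r) →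
        X ^ (eps k (k+1) n r) * ((1 - X ^ r) * Pq r) * fq k k (n - (k+1)*r) = 0 := by
      intro r hr hr'
      have hr0 : r = 0 := by
        by_contra h
        exact hr' (Finset.mem_filter.mpr ⟨hr, by omega⟩)
      subst hr0
      simp
    rw [← Finset.sum_subset (Finset.filter_subset _ _) hvan3]
    apply Finset.sum_nbij' (i := fun r => r - 1) (j := fun r => r + 1)
    · intro r hr
      simp only [Finset.mem_filter, mem_Rset] at hr ⊢
      obtain ⟨hr1, hr2⟩ := hr
      obtain ⟨s, rfl⟩ : ∃ s, r = s + 1 := ⟨r - 1, by omega⟩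
      simp only [Nat.add_sub_cancel]
      rw [Nat.mul_succ] at hr1
      generalize (k+1)*s = Q at hr1 ⊢
      omega
    · intro s hs
      simp only [Finset.mem_filter, mem_Rset] at hs ⊢
      rw [Nat.mul_succ]
      constructor
      · generalize (k+1)*s = Q at hs ⊢
        omega
      · omega
    · intro r hr
      simp only [Finset.mem_filter] at hr
      omega
    · intro s _
      simp
    · intro r hr
      simp only [Finset.mem_filter, mem_Rset] at hr
      obtain ⟨hr1, hr2⟩ := hr
      obtain ⟨s, rfl⟩ : ∃ s, r = s + 1 := ⟨r - 1, by omega⟩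
      simp only [Nat.add_sub_cancel]
      have hP : (1 - X ^ (s+1)) * Pq (s+1) = Pq s := by
        have := Pq_pred (s+1) (by omega)
        rwa [Nat.add_sub_cancel] at this
      rw [hP]
      rw [min_eq_left (Nat.zero_le k)]
      rw [fq_rec0 k ((n-(k+1)) - (k+1)*s)]
      have harg : n - (k+1)*(s+1) = (n-(k+1)) - (k+1)*s := by
        rw [Nat.mul_succ]
        generalize (k+1)*s = Q
        omega
      have hexp := eps_X2 k (k+1) n s (by omega) (by omega) hbn hr1
      rw [Nat.sub_self] at hexp
      rw [harg, hexp]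
      rw [pow_add, pow_add]
      ring
  have hb1 : hq k k n
      = ∑ r ∈ Rset k n, X ^ (eps k k n r) * Pq r * fq k k (n - (k+1)*r) := by
    rw [hq]
    apply Finset.sum_congr rfl
    intro r _
    rw [min_self]
  rw [stepA, stepC, hb1]

lemma hq_rec1 (k b n : ℕ) (hb : 1 ≤ b) (hbk : b ≤ k+1) (hbn : b ≤ n) :
    hq k b n = hq k (b-1) n + X ^ n * hq k ((k+1)-b) (n-b) := by
  rcases Nat.lt_or_ge b (k+1) with h | h
  · exact hq_rec1_low k b n hb (by omega) hbn
  · have hbked : b = k+1 := by omega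
    subst hbked
    have h1 : (k+1) - 1 = k := by omega
    have h2 : (k+1) - (k+1) = 0 := by omega
    rw [h1, h2]
    exact hq_rec1_top k n hbn

end AuxFermi
namespace AuxFermi

lemma telescope (u v : ℕ → PS) (K : ℕ)
    (h : ∀ b, 1 ≤ b → b ≤ K → u b = u (b-1) + v b) :
    u K = u 0 + ∑ b ∈ Finset.Icc 1 K, v b := by
  induction K with
  | zero => simp
  | succ K ih =>
    rw [h (K+1) (by omega) le_rfl, Nat.add_sub_cancel,
      ih (fun b h1 h2 => h b h1 (by omega)),
      Finset.sum_Icc_succ_top (by omega : 1 ≤ K+1)]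
    ring

lemma fq_eq_gq : ∀ K b n : ℕ, b ≤ K → fq K b n = gq K b n := by
  intro K
  induction K with
  | zero =>
    intro b n _
    rw [fq_k0, gq_k0]
  | succ k ih =>
    have hgq : ∀ b n, b ≤ k+1 → gq (k+1) b n = hq k b n := by
      intro b n hb
      rw [gq_rec k b n hb, hq]
      apply Finset.sum_congr rfl
      intro r _
      simp only [eps]
      rw [ih (min b k) (n - (k+1)*r) (min_le_right _ _)]
    have main : ∀ n b, b ≤ k+1 → fq (k+1) b n = hq k b n := by
      intro n
      induction n using Nat.strong_induction_on with
      | _ n IH =>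
        rcases Nat.eq_zero_or_pos n with rfl | hn
        · intro b _
          rw [fq_base, hq_base]
        have htop : fq (k+1) (k+1) n = hq k (k+1) n := by
          have hveq : ∀ b ∈ Finset.Icc 1 (k+1),
              (if b ≤ n then X ^ n * fq (k+1) ((k+1)-b) (n-b) else 0)
                = (if b ≤ n then X ^ n * hq k ((k+1)-b) (n-b) else 0) := by
            intro b hbIcc
            simp only [Finset.mem_Icc] at hbIcc
            by_cases hbn : b ≤ n
            · rw [if_pos hbn, if_pos hbn,
                IH (n-b) (by omega) ((k+1)-b) (by omega)]
            · rw [if_neg hbn, if_neg hbn]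
          have hfrec : ∀ b, 1 ≤ b → b ≤ k+1 → fq (k+1) b n
              = fq (k+1) (b-1) n
                + (if b ≤ n then X ^ n * fq (k+1) ((k+1)-b) (n-b) else 0) := by
            intro b h1 h2
            by_cases hbn : b ≤ n
            · rw [if_pos hbn]
              exact fq_rec1 (k+1) b n h1 h2 hbn
            · rw [if_neg hbn, add_zero]
              exact fq_rec2 (k+1) b n h1 (by omega)
          have hhrec : ∀ b, 1 ≤ b → b ≤ k+1 → hq k b n
              = hq k (b-1) n
                + (if b ≤ n then X ^ n * hq k ((k+1)-b) (n-b) else 0) := by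
            intro b h1 h2
            by_cases hbn : b ≤ n
            · rw [if_pos hbn]
              exact hq_rec1 k b n h1 h2 hbn
            · rw [if_neg hbn, add_zero]
              exact hq_rec2 k b n h1 h2 (by omega)
          have hf := telescope (fun b => fq (k+1) b n)
            (fun b => if b ≤ n then X ^ n * fq (k+1) ((k+1)-b) (n-b) else 0) (k+1) hfrec
          have hh := telescope (fun b => hq k b n)
            (fun b => if b ≤ n then X ^ n * hq k ((k+1)-b) (n-b) else 0) (k+1) hhrec
          try simp only [] at hf hh
          rw [Finset.sum_congr rfl hveq] at hf
          rw [fq_rec0 (k+1) n] at hf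
          rw [hq_rec0 k n] at hh
          have hzero : (1 - X ^ n) * (fq (k+1) (k+1) n - hq k (k+1) n) = 0 := by
            linear_combination hf - hh
          rcases mul_eq_zero.mp hzero with h | h
          · exact absurd h (one_sub_X_pow_ne_zero n hn)
          · linear_combination h
        intro b
        induction b with
        | zero =>
          intro _
          rw [fq_rec0, hq_rec0, htop]
        | succ b ihb =>
          intro hb
          by_cases hbn : b+1 ≤ n
          · rw [fq_rec1 (k+1) (b+1) n (by omega) hb hbn,
              hq_rec1 k (b+1) n (by omega) hb hbn, Nat.add_sub_cancel,
              ihb (by omega), IH (n-(b+1)) (by omega) ((k+1)-(b+1)) (by omega)]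
          · rw [fq_rec2 (k+1) (b+1) n (by omega) (by omega),
              hq_rec2 k (b+1) n (by omega) hb (by omega), Nat.add_sub_cancel]
            exact ihb (by omega)
    intro b n hb
    rw [main n b hb, hgq b n hb]

/- ## the exponent identity with fermiExp2 -/

lemma two_choose_two (v : ℕ) : 2 * Nat.choose v 2 = v * (v - 1) := by
  induction v with
  | zero => rfl
  | succ v ih =>
    rw [Nat.choose_succ_succ, Nat.mul_add, ih, Nat.choose_one_right, Nat.add_sub_cancel]
    cases v with
    | zero => rfl
    | succ w =>
      rw [Nat.add_sub_cancel]
      ring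

lemma sv_sq (K : ℕ) (m : Fin K → ℕ) :
    ∑ j : Fin K, (Sv m j) ^ 2
      = (∑ pq ∈ Finset.univ.filter (fun pq : Fin K × Fin K => pq.1 < pq.2),
          2 * (min (pq.1 : ℕ) (pq.2 : ℕ) + 1) * m pq.1 * m pq.2)
        + ∑ a : Fin K, ((a : ℕ) + 1) * (m a) ^ 2 := by
  have h1 : ∀ j : Fin K, (Sv m j) ^ 2
      = ∑ p : Fin K, ∑ q : Fin K,
          (if (j : ℕ) ≤ (p : ℕ) ∧ (j : ℕ) ≤ (q : ℕ) then m p * m q else 0) := by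
    intro j
    rw [Sv, sq, Finset.sum_mul_sum]
    apply Finset.sum_congr rfl
    intro p _
    apply Finset.sum_congr rfl
    intro q _
    by_cases hp : (j : ℕ) ≤ (p : ℕ) <;> by_cases hq : (j : ℕ) ≤ (q : ℕ) <;>
      simp [hp, hq]
  have h2 : ∑ j : Fin K, (Sv m j) ^ 2
      = ∑ p : Fin K, ∑ q : Fin K, (min (p : ℕ) (q : ℕ) + 1) * (m p * m q) := by
    rw [Finset.sum_congr rfl (fun j _ => h1 j), Finset.sum_comm]
    apply Finset.sum_congr rfl
    intro p _
    rw [Finset.sum_comm]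
    apply Finset.sum_congr rfl
    intro q _
    rw [← Finset.sum_filter, Finset.sum_const, smul_eq_mul]
    congr 1
    have heq : (Finset.univ.filter fun j : Fin K => (j : ℕ) ≤ (p : ℕ) ∧ (j : ℕ) ≤ (q : ℕ))
        = Finset.univ.filter fun j : Fin K => (j : ℕ) ≤ min (p : ℕ) (q : ℕ) := by
      apply Finset.filter_congr
      intro j _
      omega
    rw [heq, card_filter_fin_le (by have := p.isLt; have := q.isLt; omega)]
  rw [h2, ← Finset.sum_product']
  have h3 : (Finset.univ ×ˢ Finset.univ : Finset (Fin K × Fin K)) = Finset.univ :=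
    Finset.univ_product_univ
  rw [h3]
  rw [← Finset.sum_filter_add_sum_filter_not Finset.univ
    (fun pq : Fin K × Fin K => pq.1 < pq.2)]
  rw [← Finset.sum_filter_add_sum_filter_not
    (Finset.univ.filter (fun pq : Fin K × Fin K => ¬ pq.1 < pq.2))
    (fun pq : Fin K × Fin K => pq.2 < pq.1)]
  have hswap : (∑ pq ∈ (Finset.univ.filter
        (fun pq : Fin K × Fin K => ¬ pq.1 < pq.2)).filter
        (fun pq : Fin K × Fin K => pq.2 < pq.1),
        (min (pq.1 : ℕ) (pq.2 : ℕ) + 1) * (m pq.1 * m pq.2))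
      = ∑ pq ∈ Finset.univ.filter (fun pq : Fin K × Fin K => pq.1 < pq.2),
        (min (pq.1 : ℕ) (pq.2 : ℕ) + 1) * (m pq.1 * m pq.2) := by
    apply Finset.sum_nbij' (i := Prod.swap) (j := Prod.swap)
    · intro pq hpq
      simp only [Finset.mem_filter, Finset.mem_univ, true_and] at hpq ⊢
      exact hpq.2
    · intro pq hpq
      simp only [Finset.mem_filter, Finset.mem_univ, true_and] at hpq ⊢
      exact ⟨by simp [Prod.swap]; omega, by simpa using hpq⟩
    · intro pq _; simp
    · intro pq _; simp
    · intro pq _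
      simp only [Prod.fst_swap, Prod.snd_swap]
      rw [Nat.min_comm]
      ring
  have hdiag : (∑ pq ∈ (Finset.univ.filter
        (fun pq : Fin K × Fin K => ¬ pq.1 < pq.2)).filter
        (fun pq : Fin K × Fin K => ¬ pq.2 < pq.1),
        (min (pq.1 : ℕ) (pq.2 : ℕ) + 1) * (m pq.1 * m pq.2))
      = ∑ a : Fin K, ((a : ℕ) + 1) * (m a) ^ 2 := by
    apply Finset.sum_nbij' (i := fun pq => pq.1) (j := fun a => (a, a))
    · intro pq _
      exact Finset.mem_univ _
    · intro a _
      simp only [Finset.mem_filter, Finset.mem_univ, true_and]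
      omega
    · intro pq hpq
      simp only [Finset.mem_filter, Finset.mem_univ, true_and] at hpq
      have hyp : pq.1 = pq.2 := le_antisymm (not_lt.mp hpq.2) (not_lt.mp hpq.1)
      exact Prod.ext rfl hyp
    · intro a _
      rfl
    · intro pq hpq
      simp only [Finset.mem_filter, Finset.mem_univ, true_and] at hpq
      have heq : pq.2 = pq.1 := le_antisymm (not_lt.mp hpq.1) (not_lt.mp hpq.2)
      rw [heq, Nat.min_self, sq]
  rw [hswap, hdiag]
  have hdouble : (∑ pq ∈ Finset.univ.filter (fun pq : Fin K × Fin K => pq.1 < pq.2),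
        2 * (min (pq.1 : ℕ) (pq.2 : ℕ) + 1) * m pq.1 * m pq.2)
      = (∑ pq ∈ Finset.univ.filter (fun pq : Fin K × Fin K => pq.1 < pq.2),
          (min (pq.1 : ℕ) (pq.2 : ℕ) + 1) * (m pq.1 * m pq.2))
        + ∑ pq ∈ Finset.univ.filter (fun pq : Fin K × Fin K => pq.1 < pq.2),
          (min (pq.1 : ℕ) (pq.2 : ℕ) + 1) * (m pq.1 * m pq.2) := by
    rw [← Finset.sum_add_distrib]
    apply Finset.sum_congr rfl
    intro pq _
    ring
  rw [hdouble]
  ring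

lemma sv_lin (K b0 : ℕ) (m : Fin K → ℕ) :
    (∑ j : Fin K, if b0 ≤ (j : ℕ) then Sv m j else 0)
      = ∑ a : Fin K, (((a : ℕ) + 1) - b0) * m a := by
  have h1 : ∀ j : Fin K, (if b0 ≤ (j : ℕ) then Sv m j else 0)
      = ∑ a : Fin K, if b0 ≤ (j : ℕ) ∧ (j : ℕ) ≤ (a : ℕ) then m a else 0 := by
    intro j
    by_cases h : b0 ≤ (j : ℕ)
    · rw [if_pos h, Sv]
      apply Finset.sum_congr rfl
      intro a _
      by_cases h2 : (j : ℕ) ≤ (a : ℕ) <;> simp [h, h2]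
    · rw [if_neg h]
      exact (Finset.sum_eq_zero fun a _ => by rw [if_neg (by tauto)]).symm
  rw [Finset.sum_congr rfl (fun j _ => h1 j), Finset.sum_comm]
  apply Finset.sum_congr rfl
  intro a _
  rw [← Finset.sum_filter, Finset.sum_const, smul_eq_mul,
    card_filter_fin_between a.isLt]

lemma expo_eq_fermi (k b0 n : ℕ) (m : Fin k → ℕ)
    (hm : ∑ a : Fin k, ((a : ℕ) + 1) * m a = n) :
    expo k b0 m = n + fermiExp2 k b0 m := by
  rw [expo, sv_sq k m, sv_lin k b0 m, fermiExp2, ← hm]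
  have h2 : ∑ a : Fin k, ((a : ℕ) + 1) * (m a) ^ 2
      = (∑ a : Fin k, 2 * ((a : ℕ) + 1) * Nat.choose (m a) 2)
        + ∑ a : Fin k, ((a : ℕ) + 1) * m a := by
    rw [← Finset.sum_add_distrib]
    apply Finset.sum_congr rfl
    intro a _
    rcases Nat.eq_zero_or_pos (m a) with h | h
    · rw [h]; simp
    · obtain ⟨w, hw⟩ : ∃ w, m a = w + 1 := ⟨m a - 1, by omega⟩
      rw [hw]
      have hc : 2 * ((a : ℕ) + 1) * Nat.choose (w+1) 2 = ((a : ℕ) + 1) * ((w+1) * w) := by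
        have := two_choose_two (w+1)
        rw [Nat.add_sub_cancel] at this
        calc 2 * ((a : ℕ) + 1) * Nat.choose (w+1) 2
            = ((a : ℕ) + 1) * (2 * Nat.choose (w+1) 2) := by ring
          _ = ((a : ℕ) + 1) * ((w+1) * w) := by rw [this]
      rw [hc]
      ring
  rw [h2]
  ring

end AuxFermi
end AuxFermi

/-- A sequence `(a_i)` of nonnegative integers (finitely many nonzero) is
`(k,2)`-admissible iff `a_i + a_{i+1} ≤ k` for all `i`; and the character
`Σ_{a ∈ C_{b₀}^{(k,2)}} q^{Σ j a_j} z^{Σ a_j}` equals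
`Σ_n z^n Σ_{m_1+2m_2+⋯+km_k=n} q^{½(mᵀAm − diagA·m)+c·m}/((q)_{m_1}⋯(q)_{m_k})`,
stated here as an identity of power series in `q` for each fixed `n` (the coefficient of
`z^n`), with `A_{ab} = 2min(a,b)` and `c = (0,…,0,1,2,…,k−b₀)`. -/
theorem fermionic_formula_k2 (k b0 : ℕ) (hk : 1 ≤ k) (hb0 : b0 ≤ k) :
    (∀ a : ℕ →₀ ℕ,
      ((∀ i, a i ≤ k) ∧ (∀ i, a i + a (i + 1) ≤ k)) ↔ (∀ i, a i + a (i + 1) ≤ k)) ∧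
    ∀ n : ℕ,
      (PowerSeries.mk fun d : ℕ =>
        (Set.ncard {a : ℕ →₀ ℕ |
            (∀ i, a i + a (i + 1) ≤ k) ∧ a 0 ≤ b0 ∧
            (a.sum fun _ v => v) = n ∧ (a.sum fun i v => i * v) = d} : ℂ)) =
      ∑ m ∈ restricted k n,
        (PowerSeries.X : PowerSeries ℂ) ^ (fermiExp2 k b0 m) *
          (∏ a : Fin k, ∏ j ∈ Finset.range (m a),
            (1 - (PowerSeries.X : PowerSeries ℂ) ^ (j + 1)))⁻¹ := by
  constructor
  · intro a
    exact ⟨fun h => h.2, fun h => ⟨fun i => le_trans (Nat.le_add_right _ _) (h i), h⟩⟩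
  · intro n
    apply mul_left_cancel₀ (pow_ne_zero n (PowerSeries.X_ne_zero (R := ℂ)))
    have hR : AuxFermi.gq k b0 n = (PowerSeries.X : PowerSeries ℂ) ^ n *
        ∑ m ∈ restricted k n,
          (PowerSeries.X : PowerSeries ℂ) ^ (fermiExp2 k b0 m) *
            (∏ a : Fin k, ∏ j ∈ Finset.range (m a),
              (1 - (PowerSeries.X : PowerSeries ℂ) ^ (j + 1)))⁻¹ := by
      rw [Finset.mul_sum, AuxFermi.gq]
      apply Finset.sum_congr rfl
      intro m hm
      rw [AuxFermi.mem_restricted m] at hm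
      rw [AuxFermi.expo_eq_fermi k b0 n m hm, pow_add, AuxFermi.invP, mul_assoc]
    exact (AuxFermi.fq_eq_gq k b0 n hb0).trans hR
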